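/- Let X be a real Banach space and L : X → ℝ a three times continuously Fréchet differentiable functional. Then for all x, x̃ ∈ X, setting e := x − x̃, one has L(x) − L(x̃) = (1/2)·(L'(x)(e) + L'(x̃)(e)) + (1/2)·∫₀¹ L'''(x̃ + s·e)(e,e,e)·s·(s−1) ds, where L'(y) denotes the first Fréchet derivative of L at y (a continuous linear functional on X) and L'''(y) the third Fréchet derivative of L at y (a continuous trilinear form on X). -/

import Mathlib

open intervalIntegral

lemma iter3_apply {X : Type*} [NormedAddCommGroup X] [NormedSpace ℝ X]
    (L : X → ℝ) (z : X) (e : X) :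
    iteratedFDeriv ℝ 3 L z ![e, e, e] =
      fderiv ℝ (fderiv ℝ (fderiv ℝ L)) z e e e := by
  have h : iteratedFDeriv ℝ 3 L z ![e, e, e] =
      iteratedFDeriv ℝ 2 (fun y => fderiv ℝ L y) z (Fin.init ![e, e, e]) (![e, e, e] (Fin.last 2)) :=
    iteratedFDeriv_succ_apply_right (𝕜 := ℝ) (f := L) (x := z) (n := 2) (m := ![e, e, e])
  rw [h, iteratedFDeriv_two_apply]
  norm_num [Fin.init, Fin.last]

set_option maxHeartbeats 1000000 in
/-- For a three times continuously Fréchet differentiable functional `L` on a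
real Banach space `X` and all `x, x̃ ∈ X`, with `e := x − x̃`:
`L x − L x̃ = (1/2)(L'(x)(e) + L'(x̃)(e)) + (1/2)∫₀¹ L'''(x̃+s e)(e,e,e) s (s−1) ds`. -/
theorem fundamental_trapezoid_identity {X : Type*}
    [NormedAddCommGroup X] [NormedSpace ℝ X] [CompleteSpace X]
    (L : X → ℝ) (hL : ContDiff ℝ 3 L) (x xt : X) :
    L x - L xt =
      (1/2) * (fderiv ℝ L x (x - xt) + fderiv ℝ L xt (x - xt)) +
        (1/2) * ∫ s in (0:ℝ)..1,
          (iteratedFDeriv ℝ 3 L (xt + s • (x - xt)) ![x - xt, x - xt, x - xt])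
            * (s * (s - 1)) := by
  set e := x - xt with he
  set D1 := fderiv ℝ L with hD1
  set D2 := fderiv ℝ D1 with hD2
  set D3 := fderiv ℝ D2 with hD3
  set φ : ℝ → X := fun s => xt + s • e with hφdef
  have hφ1 : φ 1 = x := by simp [hφdef, he]
  have hφ0 : φ 0 = xt := by simp [hφdef]
  -- smoothness
  have hD1c : ContDiff ℝ 2 D1 := hL.fderiv_right (by norm_num)
  have hD2c : ContDiff ℝ 1 D2 := hD1c.fderiv_right (by norm_num)
  letI : NormedAddCommGroup (X →L[ℝ] X →L[ℝ] ℝ) := inferInstance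
  letI : NormedSpace ℝ (X →L[ℝ] X →L[ℝ] ℝ) := inferInstance
  have hD3c : Continuous D3 := ((hD2c.fderiv_right (by norm_num) : ContDiff ℝ 0 D3).continuous)
  have hφd : ∀ s : ℝ, HasDerivAt φ e s := fun s => by
    simpa [hφdef] using ((hasDerivAt_id s).smul_const e).const_add xt
  have hφc : Continuous φ := continuous_const.add (continuous_id.smul continuous_const)
  -- the three scalar functions
  set g : ℝ → ℝ := fun s => L (φ s) with hg
  set g1 : ℝ → ℝ := fun s => D1 (φ s) e with hg1
  set g2 : ℝ → ℝ := fun s => D2 (φ s) e e with hg2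
  set g3 : ℝ → ℝ := fun s => D3 (φ s) e e e with hg3
  have hgd : ∀ s : ℝ, HasDerivAt g (g1 s) s := fun s =>
    ((hL.differentiable (by norm_num)).differentiableAt.hasFDerivAt).comp_hasDerivAt s (hφd s)
  have hg1d : ∀ s : ℝ, HasDerivAt g1 (g2 s) s := fun s => by
    have h1 : HasDerivAt (fun t => D1 (φ t)) (D2 (φ s) e) s :=
      ((hD1c.differentiable (by norm_num)).differentiableAt.hasFDerivAt).comp_hasDerivAt s (hφd s)
    exact ((ContinuousLinearMap.apply ℝ ℝ e).hasFDerivAt.comp_hasDerivAt s h1)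
  have hg2d : ∀ s : ℝ, HasDerivAt g2 (g3 s) s := fun s => by
    have h1 : HasDerivAt (fun t => D2 (φ t)) (D3 (φ s) e) s :=
      ((hD2c.differentiable (by norm_num)).differentiableAt.hasFDerivAt).comp_hasDerivAt s (hφd s)
    have h2 : HasDerivAt (fun t => D2 (φ t) e) (D3 (φ s) e e) s := by
      exact ((ContinuousLinearMap.apply ℝ (X →L[ℝ] ℝ) e).hasFDerivAt.comp_hasDerivAt s h1)
    exact ((ContinuousLinearMap.apply ℝ ℝ e).hasFDerivAt.comp_hasDerivAt s h2)
  -- continuity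
  have hg1c : Continuous g1 :=
    ((ContinuousLinearMap.apply ℝ ℝ e).continuous).comp ((hD1c.continuous).comp hφc)
  have hg2c : Continuous g2 :=
    ((ContinuousLinearMap.apply ℝ ℝ e).continuous).comp
      (((ContinuousLinearMap.apply ℝ (X →L[ℝ] ℝ) e).continuous).comp ((hD2c.continuous).comp hφc))
  have hg3c : Continuous g3 :=
    ((ContinuousLinearMap.apply ℝ ℝ e).continuous).comp
      (((ContinuousLinearMap.apply ℝ (X →L[ℝ] ℝ) e).continuous).comp
        (((ContinuousLinearMap.apply ℝ ((X →L[ℝ] X →L[ℝ] ℝ))) e).continuous.comp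
          (hD3c.comp hφc)))
  -- integrability
  have hA : IntervalIntegrable (fun s => g3 s * (s*(s-1))) MeasureTheory.volume 0 1 :=
    (hg3c.mul (continuous_id.mul (continuous_id.sub continuous_const))).intervalIntegrable _ _
  have hB : IntervalIntegrable (fun s => g2 s * (2*s-1)) MeasureTheory.volume 0 1 :=
    (hg2c.mul ((continuous_const.mul continuous_id).sub continuous_const)).intervalIntegrable _ _
  have hC : IntervalIntegrable g1 MeasureTheory.volume 0 1 := hg1c.intervalIntegrable _ _
  have hC2 : IntervalIntegrable (fun s => g1 s * 2) MeasureTheory.volume 0 1 :=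
    (hg1c.mul continuous_const).intervalIntegrable _ _
  -- FTC facts
  have I1 : ∫ s in (0:ℝ)..1, g1 s = g 1 - g 0 :=
    intervalIntegral.integral_eq_sub_of_hasDerivAt (fun s _ => hgd s) hC
  have IR : (∫ s in (0:ℝ)..1, (g3 s * (s*(s-1)) + g2 s * (2*s-1))) = 0 := by
    have h := intervalIntegral.integral_eq_sub_of_hasDerivAt
      (f := fun s => g2 s * (s*(s-1)))
      (f' := fun s => g3 s * (s*(s-1)) + g2 s * (2*s-1))
      (a := 0) (b := 1) ?_ (hA.add hB)
    · simpa using h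
    · intro s _
      have hv : HasDerivAt (fun t : ℝ => t*(t-1)) (2*s-1) s := by
        have h2 := (hasDerivAt_id s).mul ((hasDerivAt_id s).sub_const 1)
        exact h2.congr_deriv (by simp only [id]; ring)
      exact (hg2d s).mul hv
  have IS : (∫ s in (0:ℝ)..1, (g2 s * (2*s-1) + g1 s * 2)) = g1 1 + g1 0 := by
    have h := intervalIntegral.integral_eq_sub_of_hasDerivAt
      (f := fun s => g1 s * (2*s-1))
      (f' := fun s => g2 s * (2*s-1) + g1 s * 2)
      (a := 0) (b := 1) ?_ (hB.add hC2)
    · rw [h]; ring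
    · intro s _
      have hw : HasDerivAt (fun t : ℝ => 2*t-1) 2 s := by
        simpa using ((hasDerivAt_id s).const_mul 2).sub_const 1
      exact (hg1d s).mul hw
  rw [intervalIntegral.integral_add hA hB] at IR
  rw [intervalIntegral.integral_add hB hC2, intervalIntegral.integral_mul_const, I1] at IS
  -- rewrite the goal in terms of g, g1, g3
  have hEq : (∫ s in (0:ℝ)..1,
        (iteratedFDeriv ℝ 3 L (xt + s • e) ![e, e, e]) * (s * (s-1)))
      = ∫ s in (0:ℝ)..1, g3 s * (s*(s-1)) := by
    apply intervalIntegral.integral_congr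
    intro s _
    show iteratedFDeriv ℝ 3 L (xt + s • e) ![e, e, e] * (s * (s - 1)) = g3 s * (s * (s - 1))
    rw [iter3_apply]
  rw [hEq]
  have e1 : fderiv ℝ L x e = g1 1 := by rw [← hφ1]
  have e0 : fderiv ℝ L xt e = g1 0 := by rw [← hφ0]
  have f1 : L x = g 1 := by rw [← hφ1]
  have f0 : L xt = g 0 := by rw [← hφ0]
  rw [e1, e0, f1, f0]
  linarith
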